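/- Let q ≥ 1 and ℓ ≥ 2q be integers and 0 < κ < 1/2. Then χ₁(κ; q, q) > χ₁(κ; ℓ, q), where χ₁(κ; q, q) = κ + sin(4πqκ)/(4πq) − sin(2πqκ)/(πq) and χ₁(κ; ℓ, q) = sin(2π(ℓ−q)κ)/(2π(ℓ−q)) + sin(2π(ℓ+q)κ)/(2π(ℓ+q)) − sin(2πqκ)/(πq). -/

import Mathlib

open Real Set

/-- For `x ≥ π`, `sin x ≥ π - x`. -/
lemma sin_ge_pi_sub (x : ℝ) (hx : π ≤ x) : π - x ≤ Real.sin x := by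
  have h : Real.sin (x - π) ≤ x - π := Real.sin_le (by linarith)
  rw [Real.sin_sub_pi] at h
  linarith

/-- The antiderivative computation: `∫₀¹ (1 + cos(xs) - cos(ys) - cos((x+y)s)) ds`. -/
lemma integral_G (x y : ℝ) (hx : x ≠ 0) (hy : y ≠ 0) (hxy : x + y ≠ 0) :
    ∫ s in (0:ℝ)..1,
      (1 + Real.cos (x*s) - Real.cos (y*s) - Real.cos ((x+y)*s))
    = 1 + Real.sin x / x - Real.sin y / y - Real.sin (x+y) / (x+y) := by
  have hder : ∀ s ∈ Set.uIcc (0:ℝ) 1,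
      HasDerivAt (fun s : ℝ =>
        s + Real.sin (x*s)/x - Real.sin (y*s)/y - Real.sin ((x+y)*s)/(x+y))
        (1 + Real.cos (x*s) - Real.cos (y*s) - Real.cos ((x+y)*s)) s := by
    intro s _
    have h1 : ∀ c : ℝ, c ≠ 0 → HasDerivAt (fun s : ℝ => Real.sin (c*s)/c)
        (Real.cos (c*s)) s := by
      intro c hc
      have h : HasDerivAt (fun s : ℝ => c * s) c s := by
        simpa using (hasDerivAt_id s).const_mul c
      have h2 := (Real.hasDerivAt_sin (c*s)).comp s h
      have h3 := h2.div_const c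
      simpa [mul_div_assoc, mul_div_cancel_right₀ _ hc] using h3
    have := ((hasDerivAt_id s).add ((h1 x hx))).sub (h1 y hy) |>.sub (h1 (x+y) hxy)
    exact this
  have hcont : Continuous
      (fun s : ℝ => 1 + Real.cos (x*s) - Real.cos (y*s) - Real.cos ((x+y)*s)) := by
    have h : ∀ c : ℝ, Continuous fun s : ℝ => Real.cos (c*s) := fun c =>
      Real.continuous_cos.comp (continuous_const.mul continuous_id)
    exact ((continuous_const.add (h x)).sub (h y)).sub (h (x+y))
  have hint : IntervalIntegrable
      (fun s : ℝ => 1 + Real.cos (x*s) - Real.cos (y*s) - Real.cos ((x+y)*s))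
      MeasureTheory.volume 0 1 := hcont.intervalIntegrable 0 1
  rw [intervalIntegral.integral_eq_sub_of_hasDerivAt hder hint]
  simp

/-- Key analytic lemma: for `x > 0` and `y ≥ x/2`,
`1 + sinc x > sinc y + sinc (x+y)`. -/
lemma sinc_key (x y : ℝ) (hx : 0 < x) (hxy : x/2 ≤ y) :
    Real.sin y / y + Real.sin (x+y) / (x+y) < 1 + Real.sin x / x := by
  have hy : 0 < y := lt_of_lt_of_le (by linarith) hxy
  have hxy0 : 0 < x + y := by linarith
  by_cases hxπ : x ≤ π
  · by_cases hyπ : y ≤ π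
    · -- integral argument
      have hpos : 0 < ∫ s in (0:ℝ)..1,
          (1 + Real.cos (x*s) - Real.cos (y*s) - Real.cos ((x+y)*s)) := by
        apply intervalIntegral.intervalIntegral_pos_of_pos_on
        · have h : ∀ c : ℝ, Continuous fun s : ℝ => Real.cos (c*s) := fun c =>
            Real.continuous_cos.comp (continuous_const.mul continuous_id)
          exact (((continuous_const.add (h x)).sub (h y)).sub (h (x+y))).intervalIntegrable 0 1
        · intro s hs
          obtain ⟨hs0, hs1⟩ := hs
          have hxs : 0 < x * s := mul_pos hx hs0
          have hys : 0 < y * s := mul_pos hy hs0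
          have hxs' : x * s < π := by nlinarith
          have hys' : y * s < π := by nlinarith
          have hsinx := Real.sin_pos_of_pos_of_lt_pi hxs hxs'
          have hsiny := Real.sin_pos_of_pos_of_lt_pi hys hys'
          have hid : 1 + Real.cos (x*s) - Real.cos (y*s) - Real.cos ((x+y)*s)
              = (1 - Real.cos (y*s)) * (1 + Real.cos (x*s))
                + Real.sin (x*s) * Real.sin (y*s) := by
            have : (x+y)*s = x*s + y*s := by ring
            rw [this, Real.cos_add]; ring
          rw [hid]
          have h1 : 0 ≤ 1 - Real.cos (y*s) := by
            have := Real.cos_le_one (y*s); linarith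
          have h2 : 0 ≤ 1 + Real.cos (x*s) := by
            have := Real.neg_one_le_cos (x*s); linarith
          nlinarith
        · norm_num
      rw [integral_G x y hx.ne' hy.ne' hxy0.ne'] at hpos
      linarith
    · -- y > π : crude bounds
      push_neg at hyπ
      have hπ := Real.pi_gt_three
      have hb1 : Real.sin y / y ≤ 1 / y := by
        gcongr; exact Real.sin_le_one y
      have hb2 : Real.sin (x+y) / (x+y) ≤ 1 / (x+y) := by
        gcongr; exact Real.sin_le_one (x+y)
      have hc1 : 1 / y < 1 / 2 := by
        apply one_div_lt_one_div_of_lt <;> linarith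
      have hc2 : 1 / (x+y) < 1 / 2 := by
        apply one_div_lt_one_div_of_lt <;> linarith
      have hsx : 0 ≤ Real.sin x / x :=
        div_nonneg (Real.sin_nonneg_of_nonneg_of_le_pi hx.le hxπ) hx.le
      linarith
  · -- x > π
    push_neg at hxπ
    have hπ := Real.pi_gt_three
    have hb1 : Real.sin y / y ≤ 1 / y := by
      gcongr; exact Real.sin_le_one y
    have hb2 : Real.sin (x+y) / (x+y) ≤ 1 / (x+y) := by
      gcongr; exact Real.sin_le_one (x+y)
    have hc1 : 1 / y ≤ 2 / x := by
      rw [div_le_div_iff₀ hy hx]; linarith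
    have hc2 : 1 / (x+y) ≤ 2 / (3*x) := by
      rw [div_le_div_iff₀ hxy0 (by linarith : (0:ℝ) < 3*x)]; linarith
    have hsx : (π - x) / x ≤ Real.sin x / x := by
      gcongr
      · exact sin_ge_pi_sub x hxπ.le
    have hsum : 2 / x + 2 / (3*x) = (8/3) / x := by
      field_simp; ring
    have hfin : (8/3) / x < 1 + (π - x) / x := by
      have h1 : 1 + (π - x) / x = π / x := by
        field_simp; ring
      rw [h1, div_lt_div_iff₀ hx hx]
      nlinarith
    linarith

theorem chi1_q_dominates
    (ℓ q : ℕ) (hq : 1 ≤ q) (hℓ : 2 * q ≤ ℓ)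
    (κ : ℝ) (hκ : 0 < κ) (hκ' : κ < 1/2) :
    κ + Real.sin (4*π*q*κ) / (4*π*q) - Real.sin (2*π*q*κ) / (π*q)
      > Real.sin (2*π*((ℓ:ℝ)-q)*κ) / (2*π*((ℓ:ℝ)-q))
        + Real.sin (2*π*((ℓ:ℝ)+q)*κ) / (2*π*((ℓ:ℝ)+q))
        - Real.sin (2*π*q*κ) / (π*q) := by
  have hπ : (0:ℝ) < π := Real.pi_pos
  have hq1 : (1:ℝ) ≤ (q:ℝ) := by exact_mod_cast hq
  have hℓq : 2*(q:ℝ) ≤ (ℓ:ℝ) := by exact_mod_cast hℓ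
  have hq0 : (0:ℝ) < (q:ℝ) := by linarith
  have ha0 : (0:ℝ) < (ℓ:ℝ) - q := by linarith
  have hb0 : (0:ℝ) < (ℓ:ℝ) + q := by linarith
  set x := 4*π*(q:ℝ)*κ with hxdef
  set y := 2*π*((ℓ:ℝ)-q)*κ with hydef
  have hx : 0 < x := by positivity
  have hxy : x/2 ≤ y := by
    rw [hxdef, hydef]
    have : 4*π*(q:ℝ)*κ/2 = 2*π*(q:ℝ)*κ := by ring
    rw [this]
    have h1 : (q:ℝ) ≤ (ℓ:ℝ) - q := by linarith
    nlinarith [mul_pos hπ hκ]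
  have K := sinc_key x y hx hxy
  have hxyeq : x + y = 2*π*((ℓ:ℝ)+q)*κ := by rw [hxdef, hydef]; ring
  rw [hxyeq] at K
  have K2 := mul_lt_mul_of_pos_left K hκ
  have hκ0 : κ ≠ 0 := hκ.ne'
  have hπ0 : π ≠ 0 := hπ.ne'
  have hq0' : (q:ℝ) ≠ 0 := hq0.ne'
  have ha0' : (ℓ:ℝ) - q ≠ 0 := ha0.ne'
  have hb0' : (ℓ:ℝ) + q ≠ 0 := hb0.ne'
  have e1 : κ * (Real.sin x / x) = Real.sin x / (4*π*(q:ℝ)) := by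
    rw [hxdef]; field_simp
  have e2 : κ * (Real.sin y / y) = Real.sin y / (2*π*((ℓ:ℝ)-q)) := by
    rw [hydef]; field_simp
  have e3 : κ * (Real.sin (2*π*((ℓ:ℝ)+q)*κ) / (2*π*((ℓ:ℝ)+q)*κ))
      = Real.sin (2*π*((ℓ:ℝ)+q)*κ) / (2*π*((ℓ:ℝ)+q)) := by
    field_simp
  have d1 : κ * (Real.sin y / y + Real.sin (2*π*((ℓ:ℝ)+q)*κ) / (2*π*((ℓ:ℝ)+q)*κ))
      = κ * (Real.sin y / y)
        + κ * (Real.sin (2*π*((ℓ:ℝ)+q)*κ) / (2*π*((ℓ:ℝ)+q)*κ)) := by ring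
  have d2 : κ * (1 + Real.sin x / x) = κ + κ * (Real.sin x / x) := by ring
  linarith [K2, d1, d2, e1, e2, e3]
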